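/- The sequence of functions f_n converges uniformly on [0,1]² to f(x₁,x₂) = Real.sqrt (x₁ * x₂): for every ε > 0 there exists N ∈ ℕ such that for all n ≥ N and all x = (x₁,x₂) ∈ [0,1]², |f_n(x) − Real.sqrt (x₁ * x₂)| < ε. -/

import Mathlib

/-- The grid `G_n = {k / 2^n : k ∈ ℕ, k ≤ 2^n} ⊆ [0,1]`. -/
def latticeG (n : ℕ) : Set ℝ := {x : ℝ | ∃ k : ℕ, k ≤ 2 ^ n ∧ x = (k : ℝ) / 2 ^ n}

/-- The convex polytope `𝒫_n`: the convex hull of the `n`-th order lattice of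
`f(x₁,x₂) = √(x₁x₂)` together with the `n`-th order lattice of the zero function. -/
noncomputable def polyP (n : ℕ) : Set (ℝ × ℝ × ℝ) :=
  convexHull ℝ
    {v : ℝ × ℝ × ℝ | ∃ a b : ℝ, a ∈ latticeG n ∧ b ∈ latticeG n ∧
      (v = (a, b, Real.sqrt (a * b)) ∨ v = (a, b, 0))}

/-- The upper envelope `f_n(x) = sSup {z : (x₁, x₂, z) ∈ 𝒫_n}`. -/
noncomputable def fApprox (n : ℕ) (x : ℝ × ℝ) : ℝ :=
  sSup {z : ℝ | (x.1, x.2, z) ∈ polyP n}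

lemma latticeG_mem_Icc {n : ℕ} {x : ℝ} (h : x ∈ latticeG n) : x ∈ Set.Icc (0:ℝ) 1 := by
  obtain ⟨k, hk, rfl⟩ := h
  have h2 : (0:ℝ) < 2 ^ n := by positivity
  constructor
  · positivity
  · rw [div_le_one h2]
    exact_mod_cast hk

/-- hypograph of sqrt(x*y) (restricted to nonneg) is convex -/
lemma convex_S : Convex ℝ {p : ℝ × ℝ × ℝ | 0 ≤ p.1 ∧ 0 ≤ p.2.1 ∧ p.2.2 ≤ Real.sqrt (p.1 * p.2.1)} := by
  rintro ⟨a1, b1, z1⟩ ⟨ha1, hb1, hz1⟩ ⟨a2, b2, z2⟩ ⟨ha2, hb2, hz2⟩ t s ht hs hts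
  simp only [Prod.smul_mk, Prod.mk_add_mk, smul_eq_mul, Set.mem_setOf_eq] at *
  refine ⟨by positivity, by positivity, ?_⟩
  set s1 := Real.sqrt (a1 * b1) with hs1def
  set s2 := Real.sqrt (a2 * b2) with hs2def
  have hs1 : 0 ≤ s1 := Real.sqrt_nonneg _
  have hs2 : 0 ≤ s2 := Real.sqrt_nonneg _
  have hq1 : s1 ^ 2 = a1 * b1 := Real.sq_sqrt (by positivity)
  have hq2 : s2 ^ 2 = a2 * b2 := Real.sq_sqrt (by positivity)
  have key : 2 * (s1 * s2) ≤ a1 * b2 + a2 * b1 := by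
    have h1 : (2 * (s1 * s2)) ^ 2 ≤ (a1 * b2 + a2 * b1) ^ 2 := by
      nlinarith [sq_nonneg (a1 * b2 - a2 * b1)]
    have h2 : 0 ≤ 2 * (s1 * s2) := by positivity
    have h3 : 0 ≤ a1 * b2 + a2 * b1 := by positivity
    nlinarith
  have hle : t * z1 + s * z2 ≤ t * s1 + s * s2 := by
    have := mul_le_mul_of_nonneg_left hz1 ht
    have := mul_le_mul_of_nonneg_left hz2 hs
    linarith
  refine hle.trans ?_
  have hnn : 0 ≤ t * s1 + s * s2 := by positivity
  rw [show t * a1 + s * a2 = t • a1 + s • a2 by simp [smul_eq_mul]] -- no-op, keep structure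
  have : (t * s1 + s * s2) ^ 2 ≤ (t * a1 + s * a2) * (t * b1 + s * b2) := by
    have expand1 : (t * s1 + s * s2) ^ 2
        = t ^ 2 * (a1 * b1) + s ^ 2 * (a2 * b2) + t * s * (2 * (s1 * s2)) := by
      rw [← hq1, ← hq2]; ring
    have expand2 : (t * a1 + s * a2) * (t * b1 + s * b2)
        = t ^ 2 * (a1 * b1) + s ^ 2 * (a2 * b2) + t * s * (a1 * b2 + a2 * b1) := by ring
    nlinarith [mul_le_mul_of_nonneg_left key (mul_nonneg ht hs)]
  calc t * s1 + s * s2 = Real.sqrt ((t * s1 + s * s2) ^ 2) := (Real.sqrt_sq hnn).symm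
    _ ≤ Real.sqrt ((t * a1 + s * a2) * (t * b1 + s * b2)) := Real.sqrt_le_sqrt this

lemma polyP_subset (n : ℕ) :
    polyP n ⊆ {p : ℝ × ℝ × ℝ | 0 ≤ p.1 ∧ 0 ≤ p.2.1 ∧ p.2.2 ≤ Real.sqrt (p.1 * p.2.1)} := by
  apply convexHull_min _ convex_S
  rintro v ⟨a, b, ha, hb, hv | hv⟩ <;> subst hv <;>
    obtain ⟨ha0, ha1⟩ := latticeG_mem_Icc ha <;>
    obtain ⟨hb0, hb1⟩ := latticeG_mem_Icc hb
  · exact ⟨ha0, hb0, le_refl _⟩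
  · exact ⟨ha0, hb0, Real.sqrt_nonneg _⟩

lemma sqrt_le_sqrt_add_sqrt {u v d : ℝ} (hv : 0 ≤ v) (hd : 0 ≤ d) (h : u ≤ v + d) :
    Real.sqrt u ≤ Real.sqrt v + Real.sqrt d := by
  have h2 : u ≤ (Real.sqrt v + Real.sqrt d) ^ 2 := by
    nlinarith [Real.sq_sqrt hv, Real.sq_sqrt hd, Real.sqrt_nonneg v, Real.sqrt_nonneg d,
      mul_nonneg (Real.sqrt_nonneg v) (Real.sqrt_nonneg d)]
  calc Real.sqrt u ≤ Real.sqrt ((Real.sqrt v + Real.sqrt d) ^ 2) := Real.sqrt_le_sqrt h2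
    _ = Real.sqrt v + Real.sqrt d := Real.sqrt_sq (by positivity)

lemma exists_grid (n : ℕ) {x : ℝ} (h0 : 0 ≤ x) (h1 : x ≤ 1) :
    ∃ a : ℝ, a ∈ latticeG n ∧ (a + 1 / 2 ^ n) ∈ latticeG n ∧ a ≤ x ∧ x ≤ a + 1 / 2 ^ n := by
  have h2 : (0:ℝ) < 2 ^ n := by positivity
  by_cases hx : x = 1
  · subst hx
    refine ⟨((2 ^ n - 1 : ℕ) : ℝ) / 2 ^ n, ⟨2 ^ n - 1, Nat.sub_le _ _, rfl⟩, ?_, ?_, ?_⟩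
    · refine ⟨2 ^ n, le_refl _, ?_⟩
      have : ((2 ^ n - 1 : ℕ) : ℝ) = (2:ℝ) ^ n - 1 := by
        push_cast [Nat.cast_sub (Nat.one_le_two_pow)]
        ring
      rw [this]
      push_cast
      field_simp
      ring
    · have : ((2 ^ n - 1 : ℕ) : ℝ) = (2:ℝ) ^ n - 1 := by
        push_cast [Nat.cast_sub (Nat.one_le_two_pow)]
        ring
      rw [this, div_le_one h2]; linarith
    · have : ((2 ^ n - 1 : ℕ) : ℝ) = (2:ℝ) ^ n - 1 := by
        push_cast [Nat.cast_sub (Nat.one_le_two_pow)]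
        ring
      rw [this, ← add_div, sub_add_cancel, div_self (ne_of_gt h2)]
  · have hx1 : x < 1 := lt_of_le_of_ne h1 hx
    have hfl0 : 0 ≤ ⌊x * 2 ^ n⌋ := Int.floor_nonneg.2 (by positivity)
    set k : ℕ := ⌊x * 2 ^ n⌋.toNat with hk
    have hkf : (k : ℝ) = (⌊x * 2 ^ n⌋ : ℝ) := by
      rw [hk]; exact_mod_cast Int.toNat_of_nonneg hfl0
    have hklt : k < 2 ^ n := by
      have h4 : ⌊x * 2 ^ n⌋ < ((2 ^ n : ℕ) : ℤ) := by
        apply Int.floor_lt.2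
        push_cast
        nlinarith
      omega
    refine ⟨(k : ℝ) / 2 ^ n, ⟨k, by omega, rfl⟩, ?_, ?_, ?_⟩
    · refine ⟨k + 1, by omega, ?_⟩
      push_cast
      field_simp
    · rw [div_le_iff₀ h2, hkf]
      exact Int.floor_le _
    · have h3 : x * 2 ^ n < (k : ℝ) + 1 := by
        rw [hkf]; exact Int.lt_floor_add_one _
      rw [← add_div, le_div_iff₀ h2]
      linarith


lemma corner_bound {p q x₁ x₂ e : ℝ} (hp0 : 0 ≤ p) (hp1 : p ≤ 1)
    (hq0 : 0 ≤ q) (hx20 : 0 ≤ x₂) (hx21 : x₂ ≤ 1) (he : 0 ≤ e)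
    (h1 : |p - x₁| ≤ e) (h2 : |q - x₂| ≤ e) :
    Real.sqrt (x₁ * x₂) - Real.sqrt (2 * e) ≤ Real.sqrt (p * q) := by
  obtain ⟨h1a, h1b⟩ := abs_le.1 h1
  obtain ⟨h2a, h2b⟩ := abs_le.1 h2
  have hA : (x₁ - p) * x₂ ≤ e * 1 := mul_le_mul (by linarith) hx21 hx20 he
  have hB1 : p * (x₂ - q) ≤ p * e := mul_le_mul_of_nonneg_left (by linarith) hp0
  have hB2 : p * e ≤ 1 * e := mul_le_mul_of_nonneg_right hp1 he
  have hmain : x₁ * x₂ ≤ p * q + 2 * e := by nlinarith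
  linarith [sqrt_le_sqrt_add_sqrt (mul_nonneg hp0 hq0) (by linarith : (0:ℝ) ≤ 2 * e) hmain]

set_option maxHeartbeats 1000000 in
theorem fApprox_tendstoUniformly :
    ∀ ε : ℝ, 0 < ε → ∃ N : ℕ, ∀ n : ℕ, N ≤ n →
      ∀ x₁ x₂ : ℝ, x₁ ∈ Set.Icc (0:ℝ) 1 → x₂ ∈ Set.Icc (0:ℝ) 1 →
        |fApprox n (x₁, x₂) - Real.sqrt (x₁ * x₂)| < ε := by
  intro ε hε
  obtain ⟨N, hN⟩ := exists_pow_lt_of_lt_one (x := ε ^ 2 / 2) (y := (2⁻¹ : ℝ))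
    (by positivity) (by norm_num)
  refine ⟨N, fun n hn x₁ x₂ hx₁ hx₂ => ?_⟩
  obtain ⟨hx10, hx11⟩ := hx₁
  obtain ⟨hx20, hx21⟩ := hx₂
  have h2 : (0:ℝ) < 2 ^ n := by positivity
  have he0 : (0:ℝ) < 1 / 2 ^ n := by positivity
  -- the error bound
  have hδlt : Real.sqrt (2 * (1 / 2 ^ n)) < ε := by
    have hpow : ((2:ℝ)⁻¹) ^ n ≤ (2⁻¹ : ℝ) ^ N :=
      pow_le_pow_of_le_one (by norm_num) (by norm_num) hn
    have heq : (1:ℝ) / 2 ^ n = (2⁻¹ : ℝ) ^ n := by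
      rw [one_div, inv_pow]
    have h1 : (2:ℝ) * (1 / 2 ^ n) < ε ^ 2 := by
      rw [heq]; nlinarith
    calc Real.sqrt (2 * (1 / 2 ^ n)) < Real.sqrt (ε ^ 2) :=
          Real.sqrt_lt_sqrt (by positivity) h1
      _ = ε := Real.sqrt_sq hε.le
  obtain ⟨a, haG, ha'G, hax, hxa'⟩ := exists_grid n hx10 hx11
  obtain ⟨b, hbG, hb'G, hbx, hxb'⟩ := exists_grid n hx20 hx21
  obtain ⟨ha0, ha1⟩ := latticeG_mem_Icc haG
  obtain ⟨ha'0, ha'1⟩ := latticeG_mem_Icc ha'G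
  obtain ⟨hb0, hb1⟩ := latticeG_mem_Icc hbG
  obtain ⟨hb'0, hb'1⟩ := latticeG_mem_Icc hb'G
  set a' : ℝ := a + 1 / 2 ^ n with ha'def
  set b' : ℝ := b + 1 / 2 ^ n with hb'def
  set t : ℝ := (x₁ - a) * 2 ^ n with htdef
  set s : ℝ := (x₂ - b) * 2 ^ n with hsdef
  have ht0 : 0 ≤ t := mul_nonneg (by linarith) h2.le
  have hs0 : 0 ≤ s := mul_nonneg (by linarith) h2.le
  have hxa'' : x₁ ≤ a + 1 / 2 ^ n := by rw [← ha'def]; exact hxa'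
  have hxb'' : x₂ ≤ b + 1 / 2 ^ n := by rw [← hb'def]; exact hxb'
  have ht1 : t ≤ 1 := by
    have h3 : (x₁ - a) * 2 ^ n ≤ (1 / 2 ^ n) * 2 ^ n :=
      mul_le_mul_of_nonneg_right (by linarith) h2.le
    have h4 : (1 / 2 ^ n : ℝ) * 2 ^ n = 1 := by field_simp
    rw [htdef]; linarith
  have hs1 : s ≤ 1 := by
    have h3 : (x₂ - b) * 2 ^ n ≤ (1 / 2 ^ n) * 2 ^ n :=
      mul_le_mul_of_nonneg_right (by linarith [hxb'']) h2.le
    have h4 : (1 / 2 ^ n : ℝ) * 2 ^ n = 1 := by field_simp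
    rw [hsdef]; linarith
  have hxt : (1 - t) * a + t * a' = x₁ := by
    rw [ha'def, htdef]; field_simp; ring
  have hxs : (1 - s) * b + s * b' = x₂ := by
    rw [hb'def, hsdef]; field_simp; ring
  -- membership of generator points
  have hconv : Convex ℝ (polyP n) := convex_convexHull ℝ _
  have m11 : ((a, b, Real.sqrt (a * b)) : ℝ × ℝ × ℝ) ∈ polyP n :=
    subset_convexHull ℝ _ ⟨a, b, haG, hbG, Or.inl rfl⟩
  have m12 : ((a, b', Real.sqrt (a * b')) : ℝ × ℝ × ℝ) ∈ polyP n :=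
    subset_convexHull ℝ _ ⟨a, b', haG, hb'G, Or.inl rfl⟩
  have m21 : ((a', b, Real.sqrt (a' * b)) : ℝ × ℝ × ℝ) ∈ polyP n :=
    subset_convexHull ℝ _ ⟨a', b, ha'G, hbG, Or.inl rfl⟩
  have m22 : ((a', b', Real.sqrt (a' * b')) : ℝ × ℝ × ℝ) ∈ polyP n :=
    subset_convexHull ℝ _ ⟨a', b', ha'G, hb'G, Or.inl rfl⟩
  have hQA : ((1 - s) • ((a, b, Real.sqrt (a * b)) : ℝ × ℝ × ℝ)
      + s • (a, b', Real.sqrt (a * b'))) ∈ polyP n :=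
    hconv m11 m12 (by linarith) hs0 (by ring)
  have hQB : ((1 - s) • ((a', b, Real.sqrt (a' * b)) : ℝ × ℝ × ℝ)
      + s • (a', b', Real.sqrt (a' * b'))) ∈ polyP n :=
    hconv m21 m22 (by linarith) hs0 (by ring)
  have hP : ((1 - t) • ((1 - s) • ((a, b, Real.sqrt (a * b)) : ℝ × ℝ × ℝ)
      + s • (a, b', Real.sqrt (a * b')))
      + t • ((1 - s) • ((a', b, Real.sqrt (a' * b)) : ℝ × ℝ × ℝ)
      + s • (a', b', Real.sqrt (a' * b')))) ∈ polyP n :=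
    hconv hQA hQB (by linarith) ht0 (by ring)
  set Z : ℝ := (1 - t) * ((1 - s) * Real.sqrt (a * b) + s * Real.sqrt (a * b'))
      + t * ((1 - s) * Real.sqrt (a' * b) + s * Real.sqrt (a' * b')) with hZdef
  have hPeq : ((1 - t) • ((1 - s) • ((a, b, Real.sqrt (a * b)) : ℝ × ℝ × ℝ)
      + s • (a, b', Real.sqrt (a * b')))
      + t • ((1 - s) • ((a', b, Real.sqrt (a' * b)) : ℝ × ℝ × ℝ)
      + s • (a', b', Real.sqrt (a' * b'))))
      = ((x₁, x₂, Z) : ℝ × ℝ × ℝ) := by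
    simp only [Prod.smul_mk, Prod.mk_add_mk, smul_eq_mul, Prod.mk.injEq]
    exact ⟨by linear_combination hxt, by linear_combination hxs, hZdef.symm⟩
  rw [hPeq] at hP
  -- the set whose sup is fApprox
  have hub : ∀ z ∈ {z : ℝ | (x₁, x₂, z) ∈ polyP n}, z ≤ Real.sqrt (x₁ * x₂) :=
    fun z hz => (polyP_subset n hz).2.2
  have hne : Z ∈ {z : ℝ | (x₁, x₂, z) ∈ polyP n} := hP
  have hfa : fApprox n (x₁, x₂) = sSup {z : ℝ | (x₁, x₂, z) ∈ polyP n} := rfl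
  have hupper : fApprox n (x₁, x₂) ≤ Real.sqrt (x₁ * x₂) := by
    rw [hfa]; exact csSup_le ⟨Z, hne⟩ hub
  have hlower : Z ≤ fApprox n (x₁, x₂) := by
    rw [hfa]; exact le_csSup ⟨Real.sqrt (x₁ * x₂), hub⟩ hne
  -- lower bound on Z
  clear_value a' b' t s Z
  set L : ℝ := Real.sqrt (x₁ * x₂) - Real.sqrt (2 * (1 / 2 ^ n)) with hLdef
  have he' : (0:ℝ) ≤ 1 / 2 ^ n := he0.le
  have habsa : |a - x₁| ≤ 1 / 2 ^ n := abs_le.2 ⟨by linarith, by linarith⟩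
  have habsa' : |a' - x₁| ≤ 1 / 2 ^ n := abs_le.2 ⟨by rw [ha'def]; linarith, by rw [ha'def]; linarith⟩
  have habsb : |b - x₂| ≤ 1 / 2 ^ n := abs_le.2 ⟨by linarith, by linarith⟩
  have habsb' : |b' - x₂| ≤ 1 / 2 ^ n := abs_le.2 ⟨by rw [hb'def]; linarith, by rw [hb'def]; linarith⟩
  have c11 : L ≤ Real.sqrt (a * b) := corner_bound ha0 ha1 hb0 hx20 hx21 he' habsa habsb
  have c12 : L ≤ Real.sqrt (a * b') := corner_bound ha0 ha1 hb'0 hx20 hx21 he' habsa habsb'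
  have c21 : L ≤ Real.sqrt (a' * b) := corner_bound ha'0 ha'1 hb0 hx20 hx21 he' habsa' habsb
  have c22 : L ≤ Real.sqrt (a' * b') := corner_bound ha'0 ha'1 hb'0 hx20 hx21 he' habsa' habsb'
  have i1 : L ≤ (1 - s) * Real.sqrt (a * b) + s * Real.sqrt (a * b') := by
    linarith [mul_le_mul_of_nonneg_left c11 (by linarith : (0:ℝ) ≤ 1 - s),
      mul_le_mul_of_nonneg_left c12 hs0]
  have i2 : L ≤ (1 - s) * Real.sqrt (a' * b) + s * Real.sqrt (a' * b') := by
    linarith [mul_le_mul_of_nonneg_left c21 (by linarith : (0:ℝ) ≤ 1 - s),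
      mul_le_mul_of_nonneg_left c22 hs0]
  have hZL : L ≤ Z := by
    linarith [mul_le_mul_of_nonneg_left i1 (by linarith : (0:ℝ) ≤ 1 - t),
      mul_le_mul_of_nonneg_left i2 ht0]
  rw [abs_lt]
  constructor
  · rw [hLdef] at hZL; linarith
  · linarith
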